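/- For an algebraic Kähler curvature tensor R acting on r-forms, one has Σ_a i(e_a)(R_+(e_a)φ) = −F(φ) and Σ_a θ^a ∧ (R_−(e_a)φ) = −F(φ) for every r-form φ. -/

import Mathlib

open scoped RealInnerProductSpace
open Finset

noncomputable section

/-- `n`-forms on `V`: alternating `n`-linear maps `V^n → ℝ`. -/
abbrev Form (V : Type*) [AddCommGroup V] [Module ℝ V] (n : ℕ) :=
  AlternatingMap ℝ V ℝ (Fin n)

variable {V : Type*} [NormedAddCommGroup V] [InnerProductSpace ℝ V]

/-- The metric dual covector `X♭`, as a 1-form: `X♭(Y) = ⟪X, Y⟫`. -/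
def flat (X : V) : Form V 1 :=
  AlternatingMap.ofSubsingleton ℝ V ℝ 0 ((innerSL ℝ X).toLinearMap)

/-- Interior product `i(X)` on forms of positive degree. -/
def iprodS {n : ℕ} (X : V) (φ : Form V (n + 1)) : Form V n :=
  φ.curryLeft X

/-- Wedge product of a 1-form with an `n`-form. -/
def eps {n : ℕ} (ω : Form V 1) (φ : Form V n) : Form V (n + 1) :=
  AlternatingMap.domDomCongr (finSumFinEquiv.trans (finCongr (Nat.add_comm 1 n)))
    ((TensorProduct.lid ℝ ℝ).toLinearMap.compAlternatingMap (ω.domCoprod φ))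

/-- The Ricci endomorphism `ρ(X) = ∑ₐ R(X, eₐ) eₐ`. -/
def ric {q : ℕ} (R : V →ₗ[ℝ] V →ₗ[ℝ] (V →ₗ[ℝ] V))
    (e : OrthonormalBasis (Fin q) ℝ V) (X : V) : V :=
  ∑ a, R X (e a) (e a)

/-- `R₊(X) φ = ∑ₐ θᵃ ∧ (R(X, eₐ) φ)`. -/
def Rp {q : ℕ} (act : ∀ n : ℕ, (V →ₗ[ℝ] V) → Form V n → Form V n)
    (R : V →ₗ[ℝ] V →ₗ[ℝ] (V →ₗ[ℝ] V)) (e : OrthonormalBasis (Fin q) ℝ V)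
    {n : ℕ} (X : V) (φ : Form V n) : Form V (n + 1) :=
  ∑ a, eps (flat (e a)) (act n (R X (e a)) φ)

/-- `R₋(X) φ = ∑ₐ i(eₐ) (R(X, eₐ) φ)`. -/
def Rm {q : ℕ} (act : ∀ n : ℕ, (V →ₗ[ℝ] V) → Form V n → Form V n)
    (R : V →ₗ[ℝ] V →ₗ[ℝ] (V →ₗ[ℝ] V)) (e : OrthonormalBasis (Fin q) ℝ V)
    {n : ℕ} (X : V) (φ : Form V (n + 1)) : Form V n :=
  ∑ a, iprodS (e a) (act (n + 1) (R X (e a)) φ)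

/-- The curvature endomorphism `F(φ) = ∑_{a,b} θᵃ ∧ i(e_b) (R(e_b, eₐ) φ)`. -/
def Fop {q : ℕ} (act : ∀ n : ℕ, (V →ₗ[ℝ] V) → Form V n → Form V n)
    (R : V →ₗ[ℝ] V →ₗ[ℝ] (V →ₗ[ℝ] V)) (e : OrthonormalBasis (Fin q) ℝ V)
    {n : ℕ} (φ : Form V (n + 1)) : Form V (n + 1) :=
  ∑ a, ∑ b, eps (flat (e a)) (iprodS (e b) (act (n + 1) (R (e b) (e a)) φ))


section Stmt9Aux

variable {V : Type*} [NormedAddCommGroup V] [InnerProductSpace ℝ V]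

lemma form_sum_apply {n : ℕ} {ι : Type*} (s : Finset ι) (f : ι → Form V n) (v : Fin n → V) :
    (∑ i ∈ s, f i) v = ∑ i ∈ s, f i v := by
  classical
  induction s using Finset.induction_on with
  | empty => simp
  | insert _ _ h ih => rw [Finset.sum_insert h, Finset.sum_insert h, AlternatingMap.add_apply, ih]

lemma iprodS_apply {n : ℕ} (X : V) (φ : Form V (n + 1)) (v : Fin n → V) :
    iprodS X φ v = φ (Fin.cons X v) := rfl

lemma iprodS_neg {n : ℕ} (X : V) (φ : Form V (n + 1)) :
    iprodS X (-φ) = -iprodS X φ := by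
  ext v
  rw [AlternatingMap.neg_apply, iprodS_apply, iprodS_apply, AlternatingMap.neg_apply]

lemma iprodS_sum {n : ℕ} {ι : Type*} (X : V) (s : Finset ι) (f : ι → Form V (n + 1)) :
    iprodS X (∑ i ∈ s, f i) = ∑ i ∈ s, iprodS X (f i) := by
  ext v
  rw [iprodS_apply, form_sum_apply, form_sum_apply]
  exact Finset.sum_congr rfl fun i _ => rfl

set_option maxHeartbeats 2000000 in
lemma eps_apply {n : ℕ} (ω : Form V 1) (φ : Form V n) (v : Fin (n + 1) → V) :
    eps ω φ v =
      ∑ i : Fin (n + 1), (-1 : ℝ) ^ (i : ℕ) * (ω ![v i] * φ (fun j => v (i.succAbove j))) := by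
  classical
  set κ : (Fin 1 ⊕ Fin n) ≃ Fin (n + 1) := finSumFinEquiv.trans (finCongr (Nat.add_comm 1 n))
    with hκ
  have hκ0 : κ (Sum.inl 0) = 0 := by
    apply Fin.ext; simp [hκ]
  have hκr : ∀ j : Fin n, κ (Sum.inr j) = Fin.succ j := by
    intro j; apply Fin.ext; simp [hκ, Nat.add_comm]
  set σ : Fin (n + 1) → Equiv.Perm (Fin 1 ⊕ Fin n) :=
    fun i => (κ.symm.permCongr) (i.cycleRange)⁻¹ with hσ
  have hσ0 : ∀ i, σ i (Sum.inl 0) = κ.symm i := by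
    intro i
    have h1 : (i.cycleRange)⁻¹ (0 : Fin (n + 1)) = i := by
      rw [Equiv.Perm.inv_eq_iff_eq]
      exact (Fin.cycleRange_self i).symm
    simp [hσ, Equiv.permCongr_apply, hκ0, h1]
  have hσr : ∀ i (j : Fin n), σ i (Sum.inr j) = κ.symm (i.succAbove j) := by
    intro i j
    have h1 : (i.cycleRange)⁻¹ (Fin.succ j) = i.succAbove j := by
      rw [Equiv.Perm.inv_eq_iff_eq]
      exact (Fin.cycleRange_succAbove i j).symm
    simp [hσ, Equiv.permCongr_apply, hκr j, h1]
  have hsign : ∀ i : Fin (n + 1), Equiv.Perm.sign (σ i) = (-1) ^ (i : ℕ) := by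
    intro i
    rw [hσ]
    simp [Equiv.Perm.sign_permCongr, Fin.sign_cycleRange]
  set f : Fin (n + 1) → Equiv.Perm.ModSumCongr (Fin 1) (Fin n) :=
    fun i => Quotient.mk'' (σ i) with hf
  have hval : ∀ p q : Equiv.Perm (Fin 1 ⊕ Fin n),
      (Quotient.mk'' p : Equiv.Perm.ModSumCongr (Fin 1) (Fin n)) = Quotient.mk'' q →
      p (Sum.inl 0) = q (Sum.inl 0) := by
    intro p q hpq
    rw [Quotient.eq''] at hpq
    rw [QuotientGroup.leftRel_apply] at hpq
    obtain ⟨⟨sl, sr⟩, h⟩ := hpq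
    have hq : q = p * Equiv.Perm.sumCongrHom _ _ (sl, sr) := by
      rw [h, mul_inv_cancel_left]
    rw [hq]
    have hsl : sl 0 = 0 := Subsingleton.elim _ _
    simp [Equiv.Perm.mul_apply, Equiv.Perm.sumCongrHom_apply, hsl]
  have hmem : ∀ h : Equiv.Perm (Fin 1 ⊕ Fin n), h (Sum.inl 0) = Sum.inl 0 →
      h ∈ (Equiv.Perm.sumCongrHom (Fin 1) (Fin n)).range := by
    intro h hh
    have key : ∀ j : Fin n, ∃ y, h (Sum.inr j) = Sum.inr y := by
      intro j
      rcases hy : h (Sum.inr j) with k | y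
      · exfalso
        have hk : (k : Fin 1) = 0 := Subsingleton.elim _ _
        rw [hk, ← hh] at hy
        exact Sum.inr_ne_inl (h.injective hy)
      · exact ⟨y, rfl⟩
    choose g hg using key
    have hginj : Function.Injective g := by
      intro a b hab
      have h2 : h (Sum.inr a) = h (Sum.inr b) := by rw [hg a, hg b, hab]
      exact Sum.inr_injective (h.injective h2)
    let b : Equiv.Perm (Fin n) := Equiv.ofBijective g (Finite.injective_iff_bijective.mp hginj)
    refine ⟨(1, b), ?_⟩
    apply Equiv.ext
    intro x
    rcases x with k | j
    · have hk : (k : Fin 1) = 0 := Subsingleton.elim _ _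
      rw [hk]
      simpa [Equiv.Perm.sumCongrHom_apply] using hh.symm
    · have hb : b j = g j := rfl
      simp only [Equiv.Perm.sumCongrHom_apply, Equiv.Perm.sumCongr_apply, Sum.map_inr, hb]
      exact (hg j).symm
  have hinj : Function.Injective f := by
    intro i j hij
    have h1 := hval _ _ hij
    rw [hσ0 i, hσ0 j] at h1
    exact κ.symm.injective h1
  have hsurj : Function.Surjective f := by
    intro q
    induction q using Quotient.inductionOn' with
    | h p =>
      refine ⟨κ (p (Sum.inl 0)), ?_⟩
      rw [hf]
      apply Quotient.sound'
      rw [QuotientGroup.leftRel_apply]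
      apply hmem
      have h1 : σ (κ (p (Sum.inl 0))) (Sum.inl 0) = p (Sum.inl 0) := by
        rw [hσ0]; exact κ.symm_apply_apply _
      rw [Equiv.Perm.mul_apply, Equiv.Perm.inv_eq_iff_eq]
      exact h1.symm
  have hbij : Function.Bijective f := ⟨hinj, hsurj⟩
  have hunfold : eps ω φ v =
      ∑ q : Equiv.Perm.ModSumCongr (Fin 1) (Fin n),
        (TensorProduct.lid ℝ ℝ).toLinearMap
          (AlternatingMap.domCoprod.summand ω φ q (fun x => v (κ x))) := by
    rw [eps]
    rw [AlternatingMap.domDomCongr_apply, LinearMap.compAlternatingMap_apply]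
    have h2 : (ω.domCoprod φ) (fun x => v (κ x)) =
        ∑ q : Equiv.Perm.ModSumCongr (Fin 1) (Fin n),
          AlternatingMap.domCoprod.summand ω φ q (fun x => v (κ x)) := by
      rw [← MultilinearMap.sum_apply, ← AlternatingMap.domCoprod_coe]
      rfl
    simp only [Function.comp_def, ← hκ]
    rw [h2, map_sum]
  rw [hunfold]
  refine (Fintype.sum_bijective f hbij
      (fun i : Fin (n + 1) => (-1 : ℝ) ^ (i : ℕ) * (ω ![v i] * φ (fun j => v (i.succAbove j))))
      (fun q => (TensorProduct.lid ℝ ℝ).toLinearMap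
          (AlternatingMap.domCoprod.summand ω φ q (fun x => v (κ x))))
      (fun i => ?_)).symm
  simp only [hf]
  rw [AlternatingMap.domCoprod.summand_mk'']
  rw [MultilinearMap.smul_apply, MultilinearMap.domDomCongr_apply,
    MultilinearMap.domCoprod_apply]
  have harg1 : (fun k : Fin 1 => v (κ (σ i (Sum.inl k)))) = ![v i] := by
    funext k
    have hk : (k : Fin 1) = 0 := Subsingleton.elim _ _
    rw [hk, hσ0, κ.apply_symm_apply]
    simp
  have harg2 : (fun j : Fin n => v (κ (σ i (Sum.inr j)))) = fun j => v (i.succAbove j) := by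
    funext j
    rw [hσr, κ.apply_symm_apply]
  rw [hsign i]
  simp only [Function.comp_def, AlternatingMap.coe_multilinearMap]
  rw [harg1, harg2]
  rw [Units.smul_def, map_zsmul]
  simp only [LinearEquiv.coe_coe, TensorProduct.lid_tmul, smul_eq_mul, zsmul_eq_mul]
  push_cast
  ring

lemma eps_neg {n : ℕ} (ω : Form V 1) (φ : Form V n) :
    eps ω (-φ) = -eps ω φ := by
  ext v
  rw [AlternatingMap.neg_apply, eps_apply, eps_apply, ← Finset.sum_neg_distrib]
  refine Finset.sum_congr rfl fun i _ => ?_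
  rw [AlternatingMap.neg_apply]
  ring

lemma eps_sum {n : ℕ} {ι : Type*} (ω : Form V 1) (s : Finset ι) (f : ι → Form V n) :
    eps ω (∑ b ∈ s, f b) = ∑ b ∈ s, eps ω (f b) := by
  ext v
  rw [eps_apply, form_sum_apply]
  have h : ∀ i : Fin (n + 1),
      (-1 : ℝ) ^ (i : ℕ) * (ω ![v i] * (∑ b ∈ s, f b) (fun j => v (i.succAbove j)))
      = ∑ b ∈ s, (-1 : ℝ) ^ (i : ℕ) * (ω ![v i] * f b (fun j => v (i.succAbove j))) := by
    intro i
    rw [form_sum_apply, Finset.mul_sum, Finset.mul_sum]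
  rw [Finset.sum_congr rfl fun i _ => h i, Finset.sum_comm]
  exact Finset.sum_congr rfl fun b _ => (eps_apply ω (f b) v).symm

lemma cartan {n : ℕ} (ω : Form V 1) (x : V) (φ : Form V (n + 1)) :
    iprodS x (eps ω φ) = ω ![x] • φ - eps ω (iprodS x φ) := by
  ext v
  rw [AlternatingMap.sub_apply, AlternatingMap.smul_apply, iprodS_apply, eps_apply,
    Fin.sum_univ_succ]
  have h0 : (-1 : ℝ) ^ ((0 : Fin (n + 2)) : ℕ) *
      (ω ![Fin.cons (α := fun _ => V) x v 0] * φ (fun j : Fin (n + 1) => Fin.cons (α := fun _ => V) x v ((0 : Fin (n + 2)).succAbove j)))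
      = ω ![x] * φ v := by
    have harg : (fun j : Fin (n + 1) => Fin.cons (α := fun _ => V) x v ((0 : Fin (n + 2)).succAbove j)) = v := by
      funext j
      simp [Fin.zero_succAbove]
    rw [harg]
    simp
  rw [h0]
  have h1 : ∀ i : Fin (n + 1),
      (-1 : ℝ) ^ ((Fin.succ i : Fin (n + 2)) : ℕ) *
        (ω ![Fin.cons (α := fun _ => V) x v (Fin.succ i)] *
          φ (fun j : Fin (n + 1) => Fin.cons (α := fun _ => V) x v ((Fin.succ i).succAbove j)))
      = -((-1 : ℝ) ^ (i : ℕ) * (ω ![v i] * φ (Fin.cons (α := fun _ => V) x (fun j => v (i.succAbove j))))) := by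
    intro i
    have harg : (fun j : Fin (n + 1) => Fin.cons (α := fun _ => V) x v ((Fin.succ i).succAbove j))
        = Fin.cons (α := fun _ => V) x (fun j => v (i.succAbove j)) := by
      funext j
      refine Fin.cases ?_ (fun k => ?_) j
      · rw [Fin.succ_succAbove_zero, Fin.cons_zero, Fin.cons_zero]
      · rw [Fin.succ_succAbove_succ, Fin.cons_succ, Fin.cons_succ]
    rw [harg, Fin.cons_succ, Fin.val_succ, pow_succ]
    ring
  rw [Finset.sum_congr rfl fun i _ => h1 i, Finset.sum_neg_distrib]
  rw [eps_apply]
  have h2 : ∀ i : Fin (n + 1),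
      (-1 : ℝ) ^ (i : ℕ) * (ω ![v i] * (iprodS x φ) (fun j => v (i.succAbove j)))
      = (-1 : ℝ) ^ (i : ℕ) * (ω ![v i] * φ (Fin.cons (α := fun _ => V) x (fun j => v (i.succAbove j)))) := by
    intro i
    rw [iprodS_apply]
  rw [Finset.sum_congr rfl fun i _ => h2 i]
  rw [smul_eq_mul]
  ring

lemma flat_apply (X Y : V) : flat X ![Y] = ⟪X, Y⟫ := rfl

end Stmt9Aux

/-- For an algebraic Kähler curvature tensor `R` acting on `r`-forms,
`∑ₐ i(eₐ)(R₊(eₐ)φ) = -F(φ)` and `∑ₐ θᵃ ∧ (R₋(eₐ)φ) = -F(φ)` for every `r`-form `φ`. -/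
theorem sum_interior_Rp_and_sum_wedge_Rm_eq_neg_F
    {m : ℕ} (hm : 1 ≤ m)
    (J : V →ₗ[ℝ] V) (hJO : ∀ x y : V, ⟪J x, J y⟫ = ⟪x, y⟫)
    (hJ2 : ∀ x : V, J (J x) = -x)
    (e : OrthonormalBasis (Fin (2 * m)) ℝ V)
    (R : V →ₗ[ℝ] V →ₗ[ℝ] (V →ₗ[ℝ] V))
    (hRskew : ∀ X Y : V, R X Y = -R Y X)
    (hRskewadj : ∀ X Y u v : V, ⟪R X Y u, v⟫ = -⟪u, R X Y v⟫)
    (hRbianchi : ∀ X Y Z : V, R X Y Z + R Y Z X + R Z X Y = 0)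
    (hRJ : ∀ X Y v : V, R X Y (J v) = J (R X Y v))
    (hRJJ : ∀ X Y : V, R (J X) (J Y) = R X Y)
    (act : ∀ n : ℕ, (V →ₗ[ℝ] V) → Form V n → Form V n)
    (hact : ∀ (n : ℕ) (A : V →ₗ[ℝ] V) (φ : Form V n) (v : Fin n → V),
      act n A φ v = -∑ k, φ (Function.update v k (A (v k)))) :
    (∀ (r : ℕ) (φ : Form V (r + 1)),
        ∑ a, iprodS (e a) (Rp act R e (e a) φ) = -Fop act R e φ) ∧
    (∀ (r : ℕ) (φ : Form V (r + 1)),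
        ∑ a, eps (flat (e a)) (Rm act R e (e a) φ) = -Fop act R e φ) := by
  classical
  have act_zero : ∀ (n : ℕ) (φ : Form V n), act n 0 φ = 0 := by
    intro n φ
    ext v
    rw [hact, AlternatingMap.zero_apply]
    simp
  have act_neg : ∀ (n : ℕ) (A : V →ₗ[ℝ] V) (φ : Form V n), act n (-A) φ = -act n A φ := by
    intro n A φ
    ext v
    rw [hact, AlternatingMap.neg_apply, hact]
    simp
  have hdiag : ∀ a : Fin (2 * m), R (e a) (e a) = 0 := by
    intro a
    have h := hRskew (e a) (e a)
    have h3 : (2 : ℝ) • R (e a) (e a) = 0 := by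
      rw [two_smul]
      nth_rewrite 2 [h]
      abel
    simpa using (smul_eq_zero.mp h3).resolve_left (by norm_num)
  have hflat : ∀ a b : Fin (2 * m), flat (e b) ![e a] = if b = a then (1 : ℝ) else 0 := by
    intro a b
    rw [flat_apply]
    exact orthonormal_iff_ite.mp e.orthonormal b a
  constructor
  · intro r φ
    have key : ∀ a : Fin (2 * m), iprodS (e a) (Rp act R e (e a) φ)
        = act (r + 1) (R (e a) (e a)) φ
          - ∑ b, eps (flat (e b)) (iprodS (e a) (act (r + 1) (R (e a) (e b)) φ)) := by
      intro a
      simp only [Rp]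
      rw [iprodS_sum]
      have h1 : ∀ b : Fin (2 * m),
          iprodS (e a) (eps (flat (e b)) (act (r + 1) (R (e a) (e b)) φ))
          = (if b = a then (1 : ℝ) else 0) • act (r + 1) (R (e a) (e b)) φ
            - eps (flat (e b)) (iprodS (e a) (act (r + 1) (R (e a) (e b)) φ)) := by
        intro b
        rw [cartan, hflat]
      rw [Finset.sum_congr rfl fun b _ => h1 b, Finset.sum_sub_distrib]
      congr 1
      have h2 : ∀ b : Fin (2 * m),
          ((if b = a then (1 : ℝ) else 0) • act (r + 1) (R (e a) (e b)) φ)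
          = if b = a then act (r + 1) (R (e a) (e b)) φ else 0 := by
        intro b
        split <;> simp
      rw [Finset.sum_congr rfl fun b _ => h2 b, Finset.sum_ite_eq' Finset.univ a,
        if_pos (Finset.mem_univ a)]
    rw [Finset.sum_congr rfl fun a _ => key a, Finset.sum_sub_distrib]
    have hzero : ∑ a : Fin (2 * m), act (r + 1) (R (e a) (e a)) φ = 0 := by
      rw [Finset.sum_congr rfl fun a _ => by rw [hdiag a, act_zero]]
      exact Finset.sum_const_zero
    rw [hzero, zero_sub]
    simp only [Fop]
    exact congrArg Neg.neg Finset.sum_comm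
  · intro r φ
    have key : ∀ a : Fin (2 * m), eps (flat (e a)) (Rm act R e (e a) φ)
        = -∑ b, eps (flat (e a)) (iprodS (e b) (act (r + 1) (R (e b) (e a)) φ)) := by
      intro a
      simp only [Rm]
      have h1 : ∀ b : Fin (2 * m),
          iprodS (e b) (act (r + 1) (R (e a) (e b)) φ)
          = -iprodS (e b) (act (r + 1) (R (e b) (e a)) φ) := by
        intro b
        rw [hRskew (e a) (e b), act_neg, iprodS_neg]
      rw [Finset.sum_congr rfl fun b _ => h1 b, Finset.sum_neg_distrib, eps_neg, eps_sum]
    rw [Finset.sum_congr rfl fun a _ => key a, Finset.sum_neg_distrib]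
    simp only [Fop]


end
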